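/- If a formula ψ is a Boolean combination of predicates in P and induces the set A ⊆ S^k, then γ applied to the set of abstract states satisfying the Booleanized ψ equals exactly A (no precision loss for sets definable in L(P)). -/
import Mathlib

/-- Boolean combinations of predicates indexed by `ι` (the language `L(P)`). -/
inductive PForm (ι : Type*) where
  | pred : ι → PForm ι
  | conj : PForm ι → PForm ι → PForm ι
  | disj : PForm ι → PForm ι → PForm ι
  | neg  : PForm ι → PForm ι

/-- Concrete semantics of a formula in `L(P)`. -/
def cEval {X ι : Type*} (pred : ι → Set X) : PForm ι → X → Prop
  | .pred i, x => x ∈ pred i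
  | .conj φ ψ, x => cEval pred φ x ∧ cEval pred ψ x
  | .disj φ ψ, x => cEval pred φ x ∨ cEval pred ψ x
  | .neg φ, x => ¬ cEval pred φ x

/-- Abstract (Booleanized) semantics of a formula in `L(P)`. -/
def aEval {ι : Type*} : PForm ι → (ι → Bool) → Prop
  | .pred i, v => v i = true
  | .conj φ ψ, v => aEval φ v ∧ aEval ψ v
  | .disj φ ψ, v => aEval φ v ∨ aEval ψ v
  | .neg φ, v => ¬ aEval φ v

lemma aEval_iff_cEval {X ι : Type*} (pred : ι → Set X) (ψ : PForm ι) (x : X)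
    (v : ι → Bool) (hv : ∀ i, x ∈ pred i ↔ v i = true) :
    aEval ψ v ↔ cEval pred ψ x := by
  induction ψ with
  | pred i => simp [aEval, cEval, hv i]
  | conj φ ψ ih1 ih2 => simp [aEval, cEval, ih1, ih2]
  | disj φ ψ ih1 ih2 => simp [aEval, cEval, ih1, ih2]
  | neg φ ih => simp [aEval, cEval, ih]

theorem gamma_of_booleanized_eq {X ι : Type*} (pred : ι → Set X) (ψ : PForm ι)
    (A : Set X) (hA : A = {x | cEval pred ψ x}) :
    {x : X | ∃ v : ι → Bool, aEval ψ v ∧ ∀ i, x ∈ pred i ↔ v i = true} = A := by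
  subst hA
  ext x
  constructor
  · rintro ⟨v, hv, h⟩
    exact (aEval_iff_cEval pred ψ x v h).mp hv
  · intro hx
    classical
    refine ⟨fun i => decide (x ∈ pred i), ?_, fun i => by simp⟩
    exact (aEval_iff_cEval pred ψ x _ (fun i => by simp)).mpr hx
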